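/- Let X be a completely regular Hausdorff (Tychonoff) space and A(X) a subring of C(X) containing C*(X). Then X is an almost P-space (every nonempty zero set of a continuous real-valued function on X has nonempty interior in X) if and only if for every p ∈ X, the fixed maximal ideal {f ∈ A(X) : f(p) = 0} is a z°-ideal of A(X). -/

import Mathlib

open Set

/-- `Pz a` : the intersection of all minimal prime ideals of `R` which contain `a`. -/
def Pz {R : Type*} [CommRing R] (a : R) : Set R :=
  ⋂ P ∈ {P : Ideal R | P ∈ minimalPrimes R ∧ a ∈ P}, (P : Set R)

/-- A proper ideal `I` is a `z°`-ideal if `Pz a ⊆ I` for every `a ∈ I`. -/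
def IsZoIdeal {R : Type*} [CommRing R] (I : Ideal R) : Prop :=
  I ≠ ⊤ ∧ ∀ a ∈ I, Pz a ⊆ (I : Set R)

/-- The zero set `Z(f)` of a continuous function `f`. -/
def ZSet {X F : Type*} [TopologicalSpace X] [TopologicalSpace F] [Zero F]
    (f : C(X, F)) : Set X := {x | f x = 0}

/-- `f` is bounded over `X` (i.e. `f ∈ B(X,F)`). -/
def BddF {X F : Type*} [TopologicalSpace X] [Field F] [LinearOrder F] [IsStrictOrderedRing F] [TopologicalSpace F]
    (f : C(X, F)) : Prop := ∃ l : F, 0 < l ∧ ∀ x, |f x| ≤ l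

/-- `X` is completely `F`-regular: Hausdorff, and points can be separated from closed
sets by bounded `F`-valued continuous functions. -/
def CompletelyFRegular (X F : Type*) [TopologicalSpace X] [Field F] [LinearOrder F] [IsStrictOrderedRing F]
    [TopologicalSpace F] : Prop :=
  T2Space X ∧ ∀ K : Set X, IsClosed K → ∀ x ∉ K, ∃ f : C(X, F),
    BddF f ∧ f x = 0 ∧ ∀ k ∈ K, f k = 1

/-- `A` is an intermediate ring: a subring of `C(X,F)` containing all of `B(X,F)`. -/
def IsIntermediate {X F : Type*} [TopologicalSpace X] [Field F] [LinearOrder F] [IsStrictOrderedRing F]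
    [TopologicalSpace F] [OrderTopology F] (A : Subring C(X, F)) : Prop :=
  ∀ f : C(X, F), BddF f → f ∈ A

/-- An ideal of closed sets in `X`: a nonempty family of closed sets, closed under
finite unions and under passing to closed subsets. -/
def IsIdealOfClosedSets {X : Type*} [TopologicalSpace X] (P : Set (Set X)) : Prop :=
  P.Nonempty ∧ (∀ A ∈ P, IsClosed A) ∧ (∀ A ∈ P, ∀ B ∈ P, A ∪ B ∈ P) ∧
    ∀ C : Set X, IsClosed C → ∀ A ∈ P, C ⊆ A → C ∈ P

/-- `X` is an almost `P_F`-space: every nonempty zero set has nonempty interior. -/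
def AlmostPF (X F : Type*) [TopologicalSpace X] [Field F] [LinearOrder F] [IsStrictOrderedRing F]
    [TopologicalSpace F] : Prop :=
  ∀ f : C(X, F), (ZSet f).Nonempty → (interior (ZSet f)).Nonempty


set_option synthInstance.maxHeartbeats 400000 in
/-- The fixed maximal ideal M^p_A of all f in A(X,F) vanishing at p. -/
def fixedMaxIdeal {X F : Type*} [TopologicalSpace X] [Field F] [LinearOrder F] [IsStrictOrderedRing F]
    [TopologicalSpace F] [OrderTopology F] (A : Subring C(X, F)) (p : X) :
    Ideal A where
  carrier := {f : A | (f : C(X, F)) p = 0}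
  zero_mem' := by simp
  add_mem' := by
    intro a b ha hb
    simp only [Set.mem_setOf_eq] at *
    push_cast
    simp [ha, hb]
  smul_mem' := by
    intro c x hx
    simp only [Set.mem_setOf_eq, smul_eq_mul] at *
    push_cast
    simp [hx]

lemma aux_pow {R : Type*} [CommRing R] {s a : R} (hs : s ≠ 0) :
    ∀ n : ℕ, s * a ^ n = 0 → ∃ c : R, c ≠ 0 ∧ c * a = 0
  | 0, h => absurd (by simpa using h) hs
  | (n+1), h => by
      by_cases hk : s * a ^ n = 0
      · exact aux_pow hs n hk
      · exact ⟨s * a ^ n, hk, by rw [mul_assoc, ← pow_succ]; exact h⟩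

lemma minimal_prime_zero_divisor {R : Type*} [CommRing R] {P : Ideal R}
    (hP : P ∈ minimalPrimes R) {a : R} (ha : a ∈ P) :
    ∃ c : R, c ≠ 0 ∧ c * a = 0 := by
  haveI hPp : P.IsPrime := hP.1.1
  obtain ⟨y, hy, hxy⟩ := Ideal.exists_mul_mem_of_mem_minimalPrimes
    (I := (⊥ : Ideal R)) hP ha
  refine ⟨y, fun h => hy (by rw [h]; exact Ideal.zero_mem _), ?_⟩
  rw [mul_comm]; simpa using hxy

lemma mem_Pz_iff {R : Type*} [CommRing R] {a b : R} :
    b ∈ Pz a ↔ ∀ P ∈ minimalPrimes R, a ∈ P → b ∈ P := by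
  simp only [Pz, Set.mem_iInter, Set.mem_setOf_eq, SetLike.mem_coe, and_imp]

lemma Pz_mul_eq_zero {R : Type*} [CommRing R] (hred : ∀ x : R, IsNilpotent x → x = 0)
    {a b c : R} (hb : b ∈ Pz a) (hc : c * a = 0) : b * c = 0 := by
  apply hred
  have hmem : b * c ∈ sInf (minimalPrimes R) := by
    rw [Submodule.mem_sInf]
    intro P hP
    haveI hPp : Ideal.IsPrime P := hP.1.1
    by_cases haP : a ∈ P
    · exact Ideal.mul_mem_right _ P (mem_Pz_iff.mp hb P hP haP)
    · have hcP : c ∈ P :=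
        (hPp.mem_or_mem (show c * a ∈ P from hc ▸ Ideal.zero_mem P)).resolve_right haP
      exact Ideal.mul_mem_left P _ hcP
  rw [show minimalPrimes R = Ideal.minimalPrimes ⊥ from rfl,
    Ideal.sInf_minimalPrimes] at hmem
  obtain ⟨n, hn⟩ := hmem
  exact ⟨n, by simpa using hn⟩

section Top

variable {X : Type*} [TopologicalSpace X] [CompletelyRegularSpace X]

/-- Separation by a bounded real function. -/
lemma exists_sep {K : Set X} (hK : IsClosed K) {x : X} (hx : x ∉ K) :
    ∃ f : C(X, ℝ), BddF f ∧ f x = 0 ∧ ∀ k ∈ K, f k = 1 := by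
  obtain ⟨g, hg, hgx, hgK⟩ := CompletelyRegularSpace.completely_regular x K hK hx
  refine ⟨⟨fun y => (g y : ℝ), continuous_subtype_val.comp hg⟩,
    ⟨1, one_pos, fun y => ?_⟩,
    by simp [hgx], fun k hk => by simpa using congrArg Subtype.val (hgK hk)⟩
  simp only [ContinuousMap.coe_mk]
  exact abs_le.mpr ⟨by linarith [(g y).2.1], (g y).2.2⟩

variable (A : Subring C(X, ℝ))

set_option synthInstance.maxHeartbeats 400000 in
lemma A_reduced (u : A) (hu : IsNilpotent u) : u = 0 := by
  obtain ⟨n, hn⟩ := hu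
  cases n with
  | zero =>
    have h1 : (1 : A) = 0 := by simpa using hn
    calc u = u * 1 := (mul_one u).symm
    _ = 0 := by rw [h1, mul_zero]
  | succ m =>
    ext x
    have : ((u : C(X, ℝ)) x) ^ (m + 1) = 0 := by
      have h2 : ((u ^ (m+1) : A) : C(X, ℝ)) = 0 := by rw [hn]; rfl
      have h3 : ((u : C(X, ℝ)))^(m+1) = 0 := by push_cast at h2; exact h2
      calc ((u : C(X, ℝ)) x) ^ (m + 1) = (((u : C(X, ℝ)))^(m+1)) x := by simp
      _ = 0 := by rw [h3]; rfl
    have hz : (u : C(X, ℝ)) x = 0 := pow_eq_zero_iff (Nat.succ_ne_zero m) |>.mp this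
    simpa using hz

end Top

set_option maxHeartbeats 1000000 in
/-- A Tychonoff space X is an almost P-space iff every fixed maximal ideal of a ring
A(X) with C*(X) ⊆ A(X) ⊆ C(X) is a z°-ideal. -/
theorem stmt14 {X : Type*} [TopologicalSpace X] [CompletelyRegularSpace X] [T2Space X]
    (A : Subring C(X, ℝ)) (hA : IsIntermediate A) :
    (∀ f : C(X, ℝ), (ZSet f).Nonempty → (interior (ZSet f)).Nonempty) ↔
      ∀ p : X, IsZoIdeal (fixedMaxIdeal A p) := by
  have hmemM : ∀ (p : X) (u : A), u ∈ fixedMaxIdeal A p ↔ (u : C(X, ℝ)) p = 0 :=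
    fun p u => Iff.rfl
  constructor
  · -- almost P ⇒ z°
    intro h p
    constructor
    · -- proper
      intro htop
      have h1 : (1 : A) ∈ fixedMaxIdeal A p := htop ▸ Submodule.mem_top
      have : ((1 : A) : C(X, ℝ)) p = 0 := (hmemM p 1).mp h1
      simp at this
    · intro a ha b hb
      rw [SetLike.mem_coe, hmemM]
      -- b vanishes on the interior of Z(a)
      have hbint : ∀ x ∈ interior (ZSet (a : C(X, ℝ))), (b : C(X, ℝ)) x = 0 := by
        intro x hx
        obtain ⟨f, hfb, hfx, hfK⟩ := exists_sep (K := (interior (ZSet (a : C(X, ℝ))))ᶜ)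
          isOpen_interior.isClosed_compl (by simpa using hx)
        have hcb : BddF (1 - f) := by
          obtain ⟨l, hl, hlf⟩ := hfb
          exact ⟨l + 1, by linarith, fun y => by
            have := hlf y
            have h1 : |1 - f y| ≤ 1 + |f y| := by
              calc |1 - f y| ≤ |(1:ℝ)| + |f y| := abs_sub _ _
              _ = 1 + |f y| := by rw [abs_one]
            have := abs_le.mp this
            rw [abs_le]; constructor <;> simp at h1 ⊢ <;> nlinarith [abs_nonneg (f y)]⟩
        have hcA : (1 - f) ∈ A := hA _ hcb
        set c : A := ⟨1 - f, hcA⟩ with hc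
        have hca : c * a = 0 := by
          apply Subtype.ext
          push_cast
          ext y
          by_cases hy : y ∈ interior (ZSet (a : C(X, ℝ)))
          · have hy2 : y ∈ ZSet (a : C(X, ℝ)) := interior_subset hy
            have hay : (a : C(X, ℝ)) y = 0 := hy2
            simp [hay]
          · have : f y = 1 := hfK y (by simpa using hy)
            simp [hc, this]
        have hbc : b * c = 0 := Pz_mul_eq_zero (A_reduced A) hb hca
        have hpt : (b : C(X, ℝ)) x * ((c : C(X, ℝ)) x) = 0 := by
          have : ((b * c : A) : C(X, ℝ)) = 0 := by rw [hbc]; rfl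
          push_cast at this
          calc (b : C(X, ℝ)) x * (c : C(X, ℝ)) x
              = (((b : C(X, ℝ)) * (c : C(X, ℝ)))) x := rfl
          _ = 0 := by rw [this]; rfl
        have hcx : (c : C(X, ℝ)) x = 1 := by
          show (1 - f) x = 1
          simp [hfx]
        rw [hcx, mul_one] at hpt
        exact hpt
      -- p is in the closure of the interior of Z(a)
      have hpcl : p ∈ closure (interior (ZSet (a : C(X, ℝ)))) := by
        rw [mem_closure_iff]
        intro U hU hpU
        obtain ⟨f, hfb, hfp, hfK⟩ := exists_sep (K := Uᶜ) hU.isClosed_compl (by simpa using hpU)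
        set F : C(X, ℝ) := (a : C(X, ℝ)) * (a : C(X, ℝ)) + f * f with hF
        have hZF : ZSet F ⊆ ZSet (a : C(X, ℝ)) ∩ U := by
          intro y hy
          have hy' : (a : C(X, ℝ)) y * (a : C(X, ℝ)) y + f y * f y = 0 := hy
          have ha0 : (a : C(X, ℝ)) y = 0 := by nlinarith [sq_nonneg ((a : C(X,ℝ)) y), sq_nonneg (f y)]
          have hf0 : f y = 0 := by nlinarith [sq_nonneg ((a : C(X,ℝ)) y), sq_nonneg (f y)]
          refine ⟨ha0, ?_⟩
          by_contra hyU
          have := hfK y (by simpa using hyU)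
          rw [hf0] at this; norm_num at this
        have hpF : p ∈ ZSet F := by
          have hap : (a : C(X, ℝ)) p = 0 := (hmemM p a).mp ha
          show (a : C(X, ℝ)) p * (a : C(X, ℝ)) p + f p * f p = 0
          rw [hap, hfp]; ring
        obtain ⟨y, hy⟩ := h F ⟨p, hpF⟩
        refine ⟨y, ?_, ?_⟩
        · exact (hZF (interior_subset hy)).2
        · exact interior_mono (fun z hz => (hZF hz).1) hy
      -- conclude
      have hclosed : IsClosed {y | (b : C(X, ℝ)) y = 0} :=
        isClosed_eq (b : C(X, ℝ)).continuous continuous_const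
      exact hclosed.closure_subset_iff.mpr hbint hpcl
  · -- z° ⇒ almost P
    intro h f hf
    by_contra hint
    rw [Set.not_nonempty_iff_eq_empty] at hint
    obtain ⟨p, hp⟩ := hf
    have hpf : f p = 0 := hp
    set g : C(X, ℝ) := ⟨fun x => min |f x| 1, by
      apply Continuous.min _ continuous_const
      exact f.continuous.abs⟩ with hgdef
    have hgapp : ∀ x, g x = min |f x| 1 := fun _ => rfl
    have hgb : BddF g := ⟨1, one_pos, fun x => by
      rw [hgapp, abs_le]
      constructor
      · have : (0:ℝ) ≤ min |f x| 1 := le_min (abs_nonneg _) zero_le_one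
        linarith
      · exact min_le_right _ _⟩
    set a : A := ⟨g, hA g hgb⟩ with hadef
    have haM : a ∈ fixedMaxIdeal A p := by
      rw [hmemM]
      show g p = 0
      rw [hgapp, hpf]; simp
    -- no minimal prime contains a
    have hnoP : ∀ P ∈ minimalPrimes A, a ∉ P := by
      intro P hP haP
      obtain ⟨c, hc0, hca⟩ := minimal_prime_zero_divisor hP haP
      have : ∃ x, (c : C(X, ℝ)) x ≠ 0 := by
        by_contra hall
        push_neg at hall
        exact hc0 (Subtype.ext (ContinuousMap.ext fun x => hall x))
      obtain ⟨x, hx⟩ := this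
      have hVsub : {y | (c : C(X, ℝ)) y ≠ 0} ⊆ ZSet f := by
        intro y hy
        have hprod : (c : C(X, ℝ)) y * g y = 0 := by
          have : ((c * a : A) : C(X, ℝ)) = 0 := by rw [hca]; rfl
          push_cast at this
          calc (c : C(X, ℝ)) y * g y = (((c : C(X, ℝ)) * g)) y := rfl
          _ = 0 := by rw [this]; rfl
        have hg0 : g y = 0 := by
          rcases mul_eq_zero.mp hprod with h1 | h1
          · exact absurd h1 hy
          · exact h1
        have hmin0 : min |f y| 1 = 0 := (hgapp y) ▸ hg0
        by_contra hfy
        have habs : (0:ℝ) < |f y| := abs_pos.mpr hfy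
        have hminpos : (0:ℝ) < min |f y| 1 := lt_min habs one_pos
        linarith
      have hVopen : IsOpen {y | (c : C(X, ℝ)) y ≠ 0} :=
        isOpen_compl_iff.mpr (isClosed_eq (c : C(X, ℝ)).continuous continuous_const)
      have : x ∈ interior (ZSet f) := interior_maximal hVsub hVopen hx
      rw [hint] at this
      exact this
    have h1Pz : (1 : A) ∈ Pz a :=
      mem_Pz_iff.mpr fun P hP haP => absurd haP (hnoP P hP)
    have := (h p).2 a haM h1Pz
    rw [SetLike.mem_coe, hmemM] at this
    simp at this
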